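/- Let G and H be connected graphs, and let G_1,...,G_m be the copies of G in the Cartesian product G □ H indexed by the vertices of H. If c is a coloring of G □ H with no rainbow 3-AP, then for all i, j the set of colors appearing on G_j contains at most one color not appearing on G_i, i.e., |c(G_j) \ c(G_i)| ≤ 1. -/

import Mathlib

namespace AntiVDW

/-- `v 0, v 1, …, v (k-1)` is a `k`-term arithmetic progression in `G`:
consecutive vertices are at a common finite distance `d`. -/
def IsAPSeq {V : Type*} (G : SimpleGraph V) (k : ℕ) (v : ℕ → V) : Prop :=
  ∃ d : ℕ, ∀ i, i + 1 < k → G.Reachable (v i) (v (i + 1)) ∧ G.dist (v i) (v (i + 1)) = d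

/-- `G` contains a `k`-AP that is rainbow under the coloring `c`. -/
def HasRainbowAP {V α : Type*} (G : SimpleGraph V) (k : ℕ) (c : V → α) : Prop :=
  ∃ v : ℕ → V, IsAPSeq G k v ∧ ∀ i j, i < k → j < k → i ≠ j → c (v i) ≠ c (v j)

/-- The anti-van der Waerden number: the least positive `r` such that every
exact (surjective) `r`-coloring of `G` contains a rainbow `k`-AP. -/
noncomputable def aw {V : Type*} (G : SimpleGraph V) (k : ℕ) : ℕ :=
  sInf {r : ℕ | 0 < r ∧ ∀ c : V → Fin r, Function.Surjective c → HasRainbowAP G k c}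

/-- Eccentricity of a vertex. -/
noncomputable def ecc {V : Type*} [Fintype V] (G : SimpleGraph V) (v : V) : ℕ :=
  Finset.univ.sup fun u => G.dist v u

/-- Radius of a graph. -/
noncomputable def rad {V : Type*} [Fintype V] [Nonempty V] (G : SimpleGraph V) : ℕ :=
  Finset.univ.inf' Finset.univ_nonempty (ecc G)

/-- Diameter of a graph. -/
noncomputable def diam {V : Type*} [Fintype V] (G : SimpleGraph V) : ℕ :=
  Finset.univ.sup (ecc G)

section Aux


open SimpleGraph

variable {V W : Type*}

lemma walk_len_lb {G : SimpleGraph V} {H : SimpleGraph W} (hG : G.Connected) (hH : H.Connected)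
    {x y : V × W} (w : (G.boxProd H).Walk x y) :
    G.dist x.1 y.1 + H.dist x.2 y.2 ≤ w.length := by
  induction w with
  | nil => simp
  | @cons x z y h w ih =>
    rw [Walk.length_cons]
    rcases (SimpleGraph.boxProd_adj.mp h) with ⟨ha, he⟩ | ⟨ha2, he2⟩
    · have h1 : G.dist x.1 y.1 ≤ G.dist x.1 z.1 + G.dist z.1 y.1 := hG.dist_triangle
      have h2 : G.dist x.1 z.1 = 1 := SimpleGraph.dist_eq_one_iff_adj.mpr ha
      have h3 : H.dist x.2 y.2 = H.dist z.2 y.2 := by rw [he]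
      omega
    · have h1 : H.dist x.2 y.2 ≤ H.dist x.2 z.2 + H.dist z.2 y.2 := hH.dist_triangle
      have h2 : H.dist x.2 z.2 = 1 := SimpleGraph.dist_eq_one_iff_adj.mpr ha2
      have h3 : G.dist x.1 y.1 = G.dist z.1 y.1 := by rw [he2]
      omega

lemma boxProd_dist {G : SimpleGraph V} {H : SimpleGraph W} (hG : G.Connected) (hH : H.Connected)
    (u v : V) (s t : W) :
    (G.boxProd H).dist (u, s) (v, t) = G.dist u v + H.dist s t := by
  apply le_antisymm
  · obtain ⟨p, hp⟩ := hG.exists_walk_length_eq_dist u v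
    obtain ⟨q, hq⟩ := hH.exists_walk_length_eq_dist s t
    have := SimpleGraph.dist_le ((p.boxProdLeft H s).append (q.boxProdRight G v))
    rw [Walk.length_append] at this
    have h1 : (p.boxProdLeft H s).length = p.length := Walk.length_map _ _
    have h2 : (q.boxProdRight G v).length = q.length := Walk.length_map _ _
    omega
  · obtain ⟨w, hw⟩ := ((hG.boxProd hH)).exists_walk_length_eq_dist (u, s) (v, t)
    rw [← hw]
    exact walk_len_lb hG hH w

lemma exists_mid {G : SimpleGraph V} (hG : G.Connected) :
    ∀ (k m : ℕ) (u v : V), k + m = G.dist u v → ∃ y, G.dist u y = k ∧ G.dist y v = m := by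
  intro k
  induction k with
  | zero =>
    intro m u v hm
    exact ⟨u, by simp, by simpa using hm.symm⟩
  | succ k ih =>
    intro m u v hm
    obtain ⟨y, hy1, hy2⟩ := ih (m + 1) u v (by omega)
    have hne : G.dist y v ≠ 0 := by omega
    obtain ⟨p, hp⟩ := SimpleGraph.exists_walk_of_dist_ne_zero hne
    cases p with
    | nil => simp at hp; omega
    | @cons _ y' _ hadj q =>
      have hq : G.dist y' v ≤ q.length := SimpleGraph.dist_le q
      have hlen : q.length + 1 = G.dist y v := by simpa using hp
      have ht1 : G.dist y v ≤ G.dist y y' + G.dist y' v := hG.dist_triangle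
      have hd1 : G.dist y y' = 1 := SimpleGraph.dist_eq_one_iff_adj.mpr hadj
      have h3 : G.dist y' v = m := by omega
      have ht2 : G.dist u y' ≤ G.dist u y + G.dist y y' := hG.dist_triangle
      have ht3 : G.dist u v ≤ G.dist u y' + G.dist y' v := hG.dist_triangle
      exact ⟨y', by omega, h3⟩

variable {α : Type*} {G : SimpleGraph V} {H : SimpleGraph W}

lemma nr_of_not_rainbow {c : V × W → α} (hG : G.Connected) (hH : H.Connected)
    (h : ¬ HasRainbowAP (G.boxProd H) 3 c) :
    ∀ x y z : V × W, (G.boxProd H).dist x y = (G.boxProd H).dist y z →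
      c x ≠ c y → c y ≠ c z → c x ≠ c z → False := by
  intro x y z hd hxy hyz hxz
  apply h
  refine ⟨fun n => if n = 0 then x else if n = 1 then y else z,
    ⟨(G.boxProd H).dist x y, ?_⟩, ?_⟩
  · intro n hn
    have hn2 : n < 2 := by omega
    interval_cases n
    · refine ⟨(hG.boxProd hH).preconnected _ _, ?_⟩
      norm_num
    · refine ⟨(hG.boxProd hH).preconnected _ _, ?_⟩
      norm_num
      exact hd.symm
  · intro n m hn hm hnm
    interval_cases n <;> interval_cases m <;> simp only [reduceIte] <;>
      first
        | exact absurd rfl hnm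
        | exact hxy | exact hyz | exact hxz
        | exact hxy.symm | exact hyz.symm | exact hxz.symm

lemma key {c : V × W → α} (hG : G.Connected) (hH : H.Connected)
    (hno : ¬ HasRainbowAP (G.boxProd H) 3 c) (i : W) :
    ∀ (h : ℕ) (a b : α) (j : W) (u v : V), a ≠ b →
      (∀ x, c (x, i) ≠ a) → (∀ x, c (x, i) ≠ b) →
      c (u, j) = a → c (v, j) = b → H.dist j i = h → False := by
  intro h
  induction h using Nat.strong_induction_on with
  | _ h ih =>
    intro a b j u v hab ha hb hcu hcv hd
    have nr := nr_of_not_rainbow hG hH hno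
    have hE := boxProd_dist hG hH
    set ℓ := G.dist u v with hℓ
    have huv : u ≠ v := fun e => hab (by rw [← hcu, ← hcv, e])
    have hℓpos : 0 < ℓ := hG.pos_dist_of_ne huv
    by_cases hcase : h ≤ ℓ
    · -- reach layer i from q at distance ℓ
      obtain ⟨y, hy1, hy2⟩ := exists_mid hG (ℓ - h) h v u
        (by rw [SimpleGraph.dist_comm]; omega)
      refine nr (u, j) (v, j) (y, i) ?_ ?_ ?_ ?_
      · rw [hE, hE, SimpleGraph.dist_self, hy1, hd]; omega
      · rw [hcu, hcv]; exact hab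
      · rw [hcv]; exact fun e => hb y e.symm
      · rw [hcu]; exact fun e => ha y e.symm
    · -- step along H-geodesic by ℓ
      obtain ⟨t, ht1, ht2⟩ := exists_mid hH ℓ (h - ℓ) j i (by omega)
      have htj : H.dist t j = ℓ := by rw [SimpleGraph.dist_comm]; exact ht1
      have hit : H.dist i t = h - ℓ := by rw [SimpleGraph.dist_comm]; exact ht2
      have hij : H.dist i j = h := by rw [SimpleGraph.dist_comm]; exact hd
      have hut : c (u, t) = b := by
        have mem : c (u, t) = a ∨ c (u, t) = b := by
          by_contra hcon
          push_neg at hcon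
          refine nr (u, t) (u, j) (v, j) ?_ ?_ ?_ ?_
          · rw [hE, hE, SimpleGraph.dist_self, SimpleGraph.dist_self, htj]; omega
          · rw [hcu]; exact hcon.1
          · rw [hcu, hcv]; exact hab
          · rw [hcv]; exact hcon.2
        rcases mem with hA | hB
        · exfalso
          refine nr (u, t) (v, i) (v, j) ?_ ?_ ?_ ?_
          · rw [hE, hE, SimpleGraph.dist_self, ht2, hij]; omega
          · rw [hA]; exact fun e => ha v e.symm
          · rw [hcv]; exact hb v
          · rw [hA, hcv]; exact hab
        · exact hB
      have hvt : c (v, t) = a := by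
        have mem : c (v, t) = a ∨ c (v, t) = b := by
          by_contra hcon
          push_neg at hcon
          refine nr (u, j) (v, j) (v, t) ?_ ?_ ?_ ?_
          · rw [hE, hE, SimpleGraph.dist_self, SimpleGraph.dist_self, ht1]; omega
          · rw [hcu, hcv]; exact hab
          · rw [hcv]; exact fun e => hcon.2 e.symm
          · rw [hcu]; exact fun e => hcon.1 e.symm
        rcases mem with hA | hB
        · exact hA
        · exfalso
          refine nr (u, j) (u, i) (v, t) ?_ ?_ ?_ ?_
          · rw [hE, hE, SimpleGraph.dist_self, hd, hit]; omega
          · rw [hcu]; exact fun e => ha u e.symm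
          · rw [hB]; exact hb u
          · rw [hcu, hB]; exact hab
      exact ih (h - ℓ) (by omega) b a t u v hab.symm hb ha hut hvt ht2

end Aux

/-- In a rainbow-3-AP-free coloring of `G □ H`, the copy of `G` indexed by `j`
uses at most one color that does not appear on the copy indexed by `i`. -/
theorem stmt_11 {V W α : Type*} [Fintype V] [Fintype W]
    (G : SimpleGraph V) (H : SimpleGraph W) (hG : G.Connected) (hH : H.Connected)
    (c : V × W → α) (h : ¬ HasRainbowAP (G.boxProd H) 3 c) (i j : W) :
    ((c '' {p : V × W | p.2 = j}) \ (c '' {p : V × W | p.2 = i})).Subsingleton := by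
  rintro a ⟨⟨⟨p1, p2⟩, hp, hcp⟩, hna⟩ b ⟨⟨⟨q1, q2⟩, hq, hcq⟩, hnb⟩
  by_contra hne
  have ha : ∀ x, c (x, i) ≠ a := fun x hx => hna ⟨(x, i), rfl, hx⟩
  have hb : ∀ x, c (x, i) ≠ b := fun x hx => hnb ⟨(x, i), rfl, hx⟩
  have hp' : p2 = j := hp
  have hq' : q2 = j := hq
  rw [hp'] at hcp
  rw [hq'] at hcq
  exact key hG hH h i (H.dist j i) a b j p1 q1 hne ha hb hcp hcq rfl


end AntiVDW
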